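/- Let k, B_μ, B_ν > 0 and let n be a positive integer. Define f : (0, ∞) → ℝ by f(ξ) = (B_ν·ξ/n)/√((k² − n²ξ²)² + k²·B_μ²). Then f attains its strict global maximum on (0, ∞) at ξ = √k·(B_μ² + k²)^{1/4}/n. -/
import Mathlib


theorem amplitude_max_at_subharmonic_A01
    (k Bμ Bν : ℝ) (hk : 0 < k) (hBμ : 0 < Bμ) (hBν : 0 < Bν)
    (n : ℕ) (hn : 0 < n)
    (f : ℝ → ℝ)
    (hf : ∀ ξ, f ξ = (Bν * ξ / n) /
        Real.sqrt ((k ^ 2 - n ^ 2 * ξ ^ 2) ^ 2 + k ^ 2 * Bμ ^ 2)) :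
    ∀ ξ > (0:ℝ), ξ ≠ Real.sqrt k * (Bμ ^ 2 + k ^ 2) ^ ((1:ℝ)/4) / n →
      f ξ < f (Real.sqrt k * (Bμ ^ 2 + k ^ 2) ^ ((1:ℝ)/4) / n) := by
  intro ξ hξ hne
  have hn0 : (0:ℝ) < (n:ℝ) := by exact_mod_cast hn
  set ξC := Real.sqrt k * (Bμ ^ 2 + k ^ 2) ^ ((1:ℝ)/4) / n with hξCdef
  set s := Real.sqrt (Bμ ^ 2 + k ^ 2) with hsdef
  have hs0 : (0:ℝ) < s := Real.sqrt_pos.mpr (by positivity)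
  have hs2 : s ^ 2 = Bμ ^ 2 + k ^ 2 := Real.sq_sqrt (by positivity)
  have hks : k < s := by nlinarith
  have hq : ((Bμ ^ 2 + k ^ 2) ^ ((1:ℝ)/4)) ^ 2 = s := by
    rw [← Real.rpow_natCast ((Bμ ^ 2 + k ^ 2) ^ ((1:ℝ)/4)) 2,
      ← Real.rpow_mul (by positivity)]
    norm_num
    rw [hsdef, Real.sqrt_eq_rpow]
  have hξC2 : ξC ^ 2 = k * s / (n:ℝ) ^ 2 := by
    rw [hξCdef, div_pow, mul_pow, hq, Real.sq_sqrt hk.le]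
  have hξCpos : 0 < ξC := by
    rw [hξCdef]
    apply div_pos _ hn0
    exact mul_pos (Real.sqrt_pos.mpr hk) (Real.rpow_pos_of_pos (by positivity) _)
  have hu_ne : (n:ℝ) ^ 2 * ξ ^ 2 ≠ k * s := by
    intro h
    apply hne
    have h2 : ξ ^ 2 = ξC ^ 2 := by
      rw [hξC2, eq_div_iff (by positivity)]
      linear_combination h
    calc ξ = Real.sqrt (ξ ^ 2) := (Real.sqrt_sq hξ.le).symm
      _ = Real.sqrt (ξC ^ 2) := by rw [h2]
      _ = ξC := Real.sqrt_sq hξCpos.le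
  have hG : (0:ℝ) < (k ^ 2 - (n:ℝ) ^ 2 * ξ ^ 2) ^ 2 + k ^ 2 * Bμ ^ 2 := by positivity
  have hGC0 : (0:ℝ) < (k ^ 2 - (n:ℝ) ^ 2 * ξC ^ 2) ^ 2 + k ^ 2 * Bμ ^ 2 := by positivity
  have hGC : (k ^ 2 - (n:ℝ) ^ 2 * ξC ^ 2) ^ 2 + k ^ 2 * Bμ ^ 2
      = (k ^ 2 - k * s) ^ 2 + k ^ 2 * Bμ ^ 2 := by
    rw [hξC2]
    field_simp
  rw [hf ξ, hf ξC, hGC]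
  have hGCpos : (0:ℝ) < (k ^ 2 - k * s) ^ 2 + k ^ 2 * Bμ ^ 2 := by positivity
  rw [div_lt_div_iff₀ (Real.sqrt_pos.mpr hG) (Real.sqrt_pos.mpr hGCpos)]
  apply lt_of_pow_lt_pow_left₀ 2 (by positivity)
  have e1 : (Bν * ξ / (n:ℝ) * Real.sqrt ((k ^ 2 - k * s) ^ 2 + k ^ 2 * Bμ ^ 2)) ^ 2
      = Bν ^ 2 / (n:ℝ) ^ 2 * (ξ ^ 2 * ((k ^ 2 - k * s) ^ 2 + k ^ 2 * Bμ ^ 2)) := by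
    rw [mul_pow, Real.sq_sqrt hGCpos.le]
    ring
  have e2 : (Bν * ξC / (n:ℝ) *
      Real.sqrt ((k ^ 2 - (n:ℝ) ^ 2 * ξ ^ 2) ^ 2 + k ^ 2 * Bμ ^ 2)) ^ 2
      = Bν ^ 2 / (n:ℝ) ^ 2 * (k * s / (n:ℝ) ^ 2 *
        ((k ^ 2 - (n:ℝ) ^ 2 * ξ ^ 2) ^ 2 + k ^ 2 * Bμ ^ 2)) := by
    rw [mul_pow, Real.sq_sqrt hG.le, div_pow, mul_pow, hξC2]
    ring
  rw [e1, e2]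
  apply mul_lt_mul_of_pos_left _ (by positivity)
  rw [div_mul_eq_mul_div, lt_div_iff₀ (by positivity)]
  have key : k * s * ((k ^ 2 - (n:ℝ) ^ 2 * ξ ^ 2) ^ 2 + k ^ 2 * Bμ ^ 2)
      - (n:ℝ) ^ 2 * ξ ^ 2 * ((k ^ 2 - k * s) ^ 2 + k ^ 2 * Bμ ^ 2)
      = k * s * ((n:ℝ) ^ 2 * ξ ^ 2 - k * s) ^ 2 := by
    linear_combination ((n:ℝ) ^ 2 * ξ ^ 2 * k ^ 2 - k ^ 3 * s) * hs2
  have h1 : 0 < k * s * ((n:ℝ) ^ 2 * ξ ^ 2 - k * s) ^ 2 :=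
    mul_pos (mul_pos hk hs0)
      (lt_of_le_of_ne (sq_nonneg _) (Ne.symm (pow_ne_zero 2 (sub_ne_zero.mpr hu_ne))))
  nlinarith [key, h1]
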